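/- If D is a dictionary with μ₁(D) < 1/3 and f ∈ A¹(D), then the Pure Greedy Algorithm residuals satisfy ‖f − G_m^{PGA}(f,D)‖ = ‖f_m‖ ≤ |f|₁ m^{-1/2} for all m ≥ 1. -/

import Mathlib

open RealInnerProductSpace Finset

/-- The set of finite linear combinations `Σ_{g∈S} c_g g` of distinct
dictionary elements with `Σ_{g∈S} |c_g|^p ≤ M^p`. -/
def repSet {H : Type*} [NormedAddCommGroup H] [InnerProductSpace ℝ H]
    (D : Set H) (p M : ℝ) : Set H :=
  {h | ∃ (S : Finset H) (c : H → ℝ), ↑S ⊆ D ∧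
    (∑ g ∈ S, |c g| ^ p) ≤ M ^ p ∧ h = ∑ g ∈ S, c g • g}

/-- The class `A^p(D, M)` is the closure of `repSet D p M`. -/
def Aclass {H : Type*} [NormedAddCommGroup H] [InnerProductSpace ℝ H]
    (D : Set H) (p M : ℝ) : Set H :=
  closure (repSet D p M)

/-- The semi-norm `|f|_p = inf {M ≥ 0 : f ∈ A^p(D, M)}`. -/
noncomputable def Anorm {H : Type*} [NormedAddCommGroup H]
    [InnerProductSpace ℝ H] (D : Set H) (p : ℝ) (f : H) : ℝ :=
  sInf {M | 0 ≤ M ∧ f ∈ Aclass D p M}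


private lemma rec_bound (A : ℝ) (hA : 0 < A) (m : ℕ) (d : ℕ → ℝ)
    (hd0 : ∀ k, 0 ≤ d k) (h1 : d 1 ≤ A)
    (hrec : ∀ k, k < m → d (k+1) ≤ d k - (d k)^2 / A) :
    ∀ k, 1 ≤ k → k ≤ m → d k ≤ A / k := by
  intro k hk1 hkm
  induction k with
  | zero => omega
  | succ n ih =>
    rcases Nat.eq_zero_or_pos n with hn | hn
    · subst hn; simpa using h1
    · have hdn : d n ≤ A / n := ih hn (by omega)
      have hnm : n < m := by omega
      have h0 := hd0 n
      have h0' := hd0 (n+1)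
      have hn1 : (1:ℝ) ≤ (n:ℝ) := by exact_mod_cast hn
      have hnpos : (0:ℝ) < (n:ℝ) := by linarith
      have hKx : d n * (n:ℝ) ≤ A := (le_div_iff₀ hnpos).mp hdn
      have hr := hrec n hnm
      have hr' : d (n+1) * A ≤ d n * A - d n ^ 2 := by
        have h2 := mul_le_mul_of_nonneg_right hr hA.le
        rw [sub_mul, div_mul_cancel₀ _ (ne_of_gt hA)] at h2
        exact h2
      have hcast : ((n+1 : ℕ) : ℝ) = (n:ℝ) + 1 := by push_cast; ring
      rw [hcast, le_div_iff₀ (by linarith)]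
      have key : d (n+1) * ((n:ℝ)+1) * A ≤ A * A := by
        nlinarith [sq_nonneg (A - d n * (n:ℝ)),
          mul_nonneg (mul_nonneg h0 (sub_nonneg.2 hn1)) (sub_nonneg.2 hKx),
          sq_nonneg (d n)]
      exact le_of_mul_le_mul_right (by nlinarith) hA

private lemma onestep {H : Type*} [NormedAddCommGroup H] [InnerProductSpace ℝ H]
    (D : Set H) (hDnorm : ∀ g ∈ D, ‖g‖ = 1)
    (μ' : ℝ) (hμ'0 : 0 ≤ μ') (hμ'lt : μ' < 1/3)
    (hμ : ∀ g ∈ D, ∀ S : Finset H, ↑S ⊆ D → g ∉ S → ∑ h ∈ S, |⟪h, g⟫| ≤ μ')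
    (δ : ℝ) (hδ : 0 < δ)
    (v : H) (S : Finset H) (c : H → ℝ) (hS : ↑S ⊆ D)
    (g : H) (hg : g ∈ D)
    (hgreedy : ∀ g' ∈ D, |⟪v, g'⟫| ≤ |⟪v, g⟫|)
    (hr : ‖v - ∑ x ∈ S, c x • x‖ ≤ δ) :
    ∃ (S' : Finset H) (c' : H → ℝ), ↑S' ⊆ D ∧
      (∑ x ∈ S', |c' x|) ≤ (∑ x ∈ S, |c x|) + (3*(1+μ')/(1-3*μ') + 1) * δ ∧
      ∑ x ∈ S', c' x • x = (∑ x ∈ S, c x • x) - ⟪v, g⟫ • g := by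
  classical
  set t := ⟪v, g⟫ with ht
  set hv := ∑ x ∈ S, c x • x with hhv
  set C := 3*(1+μ')/(1-3*μ') + 1 with hC
  clear_value t hv C
  have h3μ : 0 < 1 - 3*μ' := by linarith
  have hC1 : 1 ≤ C := by
    have h : 0 ≤ 3*(1+μ')/(1-3*μ') := by positivity
    rw [hC]; linarith
  have hCδ : (1-3*μ') * (C*δ) = 3*(1+μ')*δ + (1-3*μ')*δ := by
    have e : (1-3*μ') * (3*(1+μ')/(1-3*μ')) = 3*(1+μ') := by field_simp
    rw [hC]; linear_combination δ * e
  have hhu : ∀ u : H, ⟪hv, u⟫ = ∑ x ∈ S, c x * ⟪x, u⟫ := by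
    intro u; rw [hhv, sum_inner]
    exact Finset.sum_congr rfl fun x _ => real_inner_smul_left x u (c x)
  have hvu : ∀ u : H, ⟪v, u⟫ = ⟪hv, u⟫ + ⟪v - hv, u⟫ := by
    intro u
    have := inner_sub_left (𝕜 := ℝ) v hv u
    linarith
  have hrub : ∀ u ∈ D, |⟪v - hv, u⟫| ≤ δ := by
    intro u hu
    calc |⟪v - hv, u⟫| ≤ ‖v - hv‖ * ‖u‖ := abs_real_inner_le_norm _ _
      _ = ‖v - hv‖ := by rw [hDnorm u hu, mul_one]
      _ ≤ δ := hr
  rcases S.eq_empty_or_nonempty with rfl | hSne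
  · -- empty support
    refine ⟨{g}, fun _ => -t, by simpa using hg, ?_, ?_⟩
    swap
    · rw [hhv]; simp
    have h1 : |t| ≤ δ := by
      have h := hrub g hg
      rw [hhv] at h
      simpa [← ht] using h
    have : δ ≤ C * δ := le_mul_of_one_le_left hδ.le hC1
    simp only [Finset.sum_singleton, Finset.sum_empty, abs_neg]
    linarith
  obtain ⟨l, hlS, hlmax⟩ := S.exists_max_image (fun x => |c x|) hSne
  set K := |c l| with hK
  clear_value K
  have hK0 : 0 ≤ K := by rw [hK]; exact abs_nonneg _
  have hlD : l ∈ D := hS hlS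
  have herase : ∀ u ∈ D, |∑ x ∈ S.erase u, c x * ⟪x, u⟫| ≤ μ' * K := by
    intro u hu
    have hsub : ↑(S.erase u) ⊆ D := fun x hx => hS (Finset.mem_coe.2
      (Finset.mem_of_mem_erase (Finset.mem_coe.1 hx)))
    calc |∑ x ∈ S.erase u, c x * ⟪x, u⟫| ≤ ∑ x ∈ S.erase u, |c x * ⟪x, u⟫| :=
        Finset.abs_sum_le_sum_abs _ _
      _ = ∑ x ∈ S.erase u, |c x| * |⟪x, u⟫| := by simp [abs_mul]
      _ ≤ ∑ x ∈ S.erase u, K * |⟪x, u⟫| := Finset.sum_le_sum (fun x hx =>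
          mul_le_mul_of_nonneg_right (hlmax x (Finset.mem_of_mem_erase hx)) (abs_nonneg _))
      _ = K * ∑ x ∈ S.erase u, |⟪x, u⟫| := by rw [Finset.mul_sum]
      _ ≤ K * μ' := mul_le_mul_of_nonneg_left
          (hμ u hu (S.erase u) hsub (Finset.notMem_erase u S)) hK0
      _ = μ' * K := mul_comm _ _
  have hsplit : ∀ u, u ∈ S → u ∈ D →
      ⟪v, u⟫ = c u + ((∑ x ∈ S.erase u, c x * ⟪x, u⟫) + ⟪v - hv, u⟫) := by
    intro u huS huD
    have huu : ⟪u, u⟫ = (1:ℝ) := by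
      rw [real_inner_self_eq_norm_sq, hDnorm u huD]; norm_num
    have : ∑ x ∈ S, c x * ⟪x, u⟫ = c u + ∑ x ∈ S.erase u, c x * ⟪x, u⟫ := by
      rw [← Finset.add_sum_erase S (fun x => c x * ⟪x, u⟫) huS, huu, mul_one]
    rw [hvu u, hhu u, this]; ring
  have hFlow : (1 - μ') * K - δ ≤ |t| := by
    have h1 : |⟪v, l⟫| ≤ |t| := hgreedy l hlD
    have h2 := hsplit l hlS hlD
    have h3 := herase l hlD
    have h4 := hrub l hlD
    have he : |(∑ x ∈ S.erase l, c x * ⟪x, l⟫) + ⟪v - hv, l⟫| ≤ μ' * K + δ :=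
      (abs_add_le _ _).trans (add_le_add h3 h4)
    have h5 : K ≤ |⟪v, l⟫| + (μ' * K + δ) := by
      have h6 : K = |⟪v, l⟫ - ((∑ x ∈ S.erase l, c x * ⟪x, l⟫) + ⟪v - hv, l⟫)| := by
        rw [hK, h2]; congr 1; ring
      calc K = |⟪v, l⟫ - ((∑ x ∈ S.erase l, c x * ⟪x, l⟫) + ⟪v - hv, l⟫)| := h6
        _ ≤ |⟪v, l⟫| + |(∑ x ∈ S.erase l, c x * ⟪x, l⟫) + ⟪v - hv, l⟫| := abs_sub _ _
        _ ≤ |⟪v, l⟫| + (μ' * K + δ) := by linarith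
    linarith
  by_cases hcase : g ∈ S
  · -- g in support
    have h2 := hsplit g hcase hg
    have hE : |t - c g| ≤ μ' * K + δ := by
      have : t - c g = (∑ x ∈ S.erase g, c x * ⟪x, g⟫) + ⟪v - hv, g⟫ := by
        rw [ht, h2]; ring
      rw [this]
      exact (abs_add_le _ _).trans (add_le_add (herase g hg) (hrub g hg))
    refine ⟨S, Function.update c g (c g - t), hS, ?_, ?_⟩
    · -- ℓ¹ bound
      have hsum1 : ∑ x ∈ S, |Function.update c g (c g - t) x|
          = |c g - t| + ∑ x ∈ S.erase g, |c x| := by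
        rw [← Finset.add_sum_erase S _ hcase, Function.update_self]
        congr 1
        exact Finset.sum_congr rfl fun x hx => by
          rw [Function.update_of_ne (Finset.ne_of_mem_erase hx)]
      have hsum2 : ∑ x ∈ S, |c x| = |c g| + ∑ x ∈ S.erase g, |c x| :=
        (Finset.add_sum_erase S _ hcase).symm
      rw [hsum1, hsum2]
      have hCδ0 : 0 ≤ C * δ := by positivity
      by_cases hbig : 3*δ ≤ (1-3*μ') * K
      · -- good case: |c g − t| ≤ |c g|
        have hclow : (1 - 2*μ') * K - 2*δ ≤ |c g| := by
          have := abs_sub_abs_le_abs_sub t (t - c g)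
          have h7 : |t - (t - c g)| = |c g| := by congr 1; ring
          rw [h7] at this
          linarith
        have : |c g - t| ≤ |c g| := by
          rw [abs_sub_comm]
          linarith
        linarith
      · -- small K: |t| ≤ C δ
        push_neg at hbig
        have htle : |t| ≤ C * δ := by
          have h8 : |t| ≤ (1 + μ') * K + δ := by
            have h9 : |t| ≤ |c g| + |t - c g| := by
              have := abs_add_le (c g) (t - c g)
              simpa using this.trans_eq' (by congr 1; ring)
            have h10 : |c g| ≤ K := hlmax g hcase
            linarith
          -- (1-3μ')|t| ≤ (1-3μ')((1+μ')K + δ) ≤ (1-3μ')Cδ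
          have h11 : (1-3*μ') * |t| ≤ (1-3*μ') * (C*δ) := by
            rw [hCδ]
            nlinarith [mul_le_mul_of_nonneg_left hbig.le (by linarith : (0:ℝ) ≤ 1 + μ')]
          exact le_of_mul_le_mul_left (by linarith [h11]) h3μ
        have : |c g - t| ≤ |c g| + |t| := abs_sub _ _
        linarith
    · -- representation
      have hs1 : ∑ x ∈ S, Function.update c g (c g - t) x • x
          = (c g - t) • g + ∑ x ∈ S.erase g, c x • x := by
        rw [← Finset.add_sum_erase S _ hcase, Function.update_self]
        congr 1
        exact Finset.sum_congr rfl fun x hx => by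
          rw [Function.update_of_ne (Finset.ne_of_mem_erase hx)]
      have hs2 : hv = c g • g + ∑ x ∈ S.erase g, c x • x := by
        rw [hhv]; exact (Finset.add_sum_erase S _ hcase).symm
      rw [hs1, hs2, sub_smul]; abel
  · -- g not in support
    have hg_t : |t| ≤ μ' * K + δ := by
      have h2 : t = (∑ x ∈ S, c x * ⟪x, g⟫) + ⟪v - hv, g⟫ := by
        rw [ht, hvu g, hhu g]
      have h3 : S.erase g = S := Finset.erase_eq_of_notMem hcase
      have h4 : |∑ x ∈ S, c x * ⟪x, g⟫| ≤ μ' * K := by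
        have := herase g hg; rwa [h3] at this
      rw [h2]
      exact (abs_add_le _ _).trans (add_le_add h4 (hrub g hg))
    have hKsmall : (1 - 2*μ') * K ≤ 2*δ := by linarith
    have htle : |t| ≤ C * δ := by
      have h11 : (1-3*μ') * |t| ≤ (1-3*μ') * (C*δ) := by
        rw [hCδ]
        nlinarith [mul_nonneg hμ'0 hK0, abs_nonneg t]
      exact le_of_mul_le_mul_left (by linarith [h11]) h3μ
    refine ⟨insert g S, Function.update c g (-t), ?_, ?_, ?_⟩
    · rw [Finset.coe_insert]
      exact Set.insert_subset hg hS
    · rw [Finset.sum_insert hcase, Function.update_self, abs_neg]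
      have : ∑ x ∈ S, |Function.update c g (-t) x| = ∑ x ∈ S, |c x| :=
        Finset.sum_congr rfl fun x hx => by
          rw [Function.update_of_ne (ne_of_mem_of_not_mem hx hcase)]
      rw [this]
      linarith
    · rw [Finset.sum_insert hcase, Function.update_self]
      have h12 : ∑ x ∈ S, Function.update c g (-t) x • x = hv :=
        hhv ▸ Finset.sum_congr rfl fun x hx => by
          rw [Function.update_of_ne (ne_of_mem_of_not_mem hx hcase)]
      rw [h12, neg_smul]; abel

set_option maxHeartbeats 1000000 in
/-- Theorem 1 -/
theorem pga_rate_A1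
    {H : Type*} [NormedAddCommGroup H] [InnerProductSpace ℝ H] [CompleteSpace H]
    [TopologicalSpace.SeparableSpace H]
    (D : Set H) (hDnorm : ∀ g ∈ D, ‖g‖ = 1)
    (hDdense : Dense (↑(Submodule.span ℝ D) : Set H))
    (μ : ℝ) (hμlt : μ < 1 / 3)
    (hμ : ∀ g ∈ D, ∀ S : Finset H, ↑S ⊆ D → g ∉ S →
      ∑ h ∈ S, |⟪h, g⟫| ≤ μ)
    (f : H) (hf : ∃ M : ℝ, 0 ≤ M ∧ f ∈ Aclass D 1 M)
    (fs : ℕ → H) (gs : ℕ → H)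
    (h0 : fs 0 = f)
    (hgD : ∀ m, gs (m + 1) ∈ D)
    (hgreedy : ∀ m, ∀ g ∈ D, |⟪fs m, g⟫| ≤ |⟪fs m, gs (m + 1)⟫|)
    (hstep : ∀ m, fs (m + 1) = fs m - ⟪fs m, gs (m + 1)⟫ • gs (m + 1)) :
    ∀ m : ℕ, 1 ≤ m → ‖fs m‖ ≤ Anorm D 1 f * (m : ℝ) ^ (-(1 / 2) : ℝ) := by
  have hμ'0 : (0:ℝ) ≤ max μ 0 := le_max_right _ _
  set μ' := max μ 0 with hμ'def
  have hμ'lt : μ' < 1/3 := max_lt hμlt (by norm_num)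
  have hμ' : ∀ g ∈ D, ∀ S : Finset H, ↑S ⊆ D → g ∉ S → ∑ h ∈ S, |⟪h, g⟫| ≤ μ' :=
    fun g hg S hS hgS => (hμ g hg S hS hgS).trans (le_max_left _ _)
  set C := 3*(1+μ')/(1-3*μ') + 1 with hCdef
  have h3μ : 0 < 1 - 3*μ' := by linarith
  have hC1 : (1:ℝ) ≤ C := by
    have h : 0 ≤ 3*(1+μ')/(1-3*μ') := by positivity
    rw [hCdef]; linarith
  have hC0 : (0:ℝ) < C := by linarith
  set M₀ := Anorm D 1 f with hM₀def
  have hM₀0 : 0 ≤ M₀ := by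
    rw [hM₀def, Anorm]
    exact Real.sInf_nonneg (fun x hx => hx.1)
  clear_value M₀ C
  intro m hm
  have hm1 : (1:ℝ) ≤ (m:ℝ) := by exact_mod_cast hm
  have hmpos : (0:ℝ) < (m:ℝ) := by linarith
  have hb : ∀ k, ‖fs (k+1)‖^2 = ‖fs k‖^2 - ⟪fs k, gs (k+1)⟫^2 := by
    intro k
    rw [hstep k, norm_sub_sq_real, real_inner_smul_right, norm_smul,
        hDnorm _ (hgD k)]
    simp only [Real.norm_eq_abs, mul_one]
    rw [sq_abs]
    ring
  have hbmono : ∀ k, ‖fs k‖^2 ≤ ‖f‖^2 := by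
    intro k
    induction k with
    | zero => rw [h0]
    | succ n ih =>
      rw [hb n]
      nlinarith [sq_nonneg (⟪fs n, gs (n+1)⟫)]
  have hnmono : ∀ k, ‖fs k‖ ≤ ‖f‖ := by
    intro k
    nlinarith [hbmono k, norm_nonneg (fs k), norm_nonneg f]
  have key : ∀ η, 0 < η → ‖fs m‖^2 ≤ (M₀ + η)^2 / m + η := by
    intro η hη
    obtain ⟨M, hMmem, hMlt⟩ : ∃ M ∈ {M : ℝ | 0 ≤ M ∧ f ∈ Aclass D 1 M}, M < M₀ + η/2 := by
      refine exists_lt_of_csInf_lt hf ?_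
      have h1 : Anorm D 1 f = sInf {M : ℝ | 0 ≤ M ∧ f ∈ Aclass D 1 M} := rfl
      rw [← h1, ← hM₀def]
      linarith
    obtain ⟨hM0, hMA⟩ := hMmem
    have hmC1 : (1:ℝ) ≤ (m:ℝ) * C := by nlinarith
    have hmC0 : (0:ℝ) < (m:ℝ) * C := by linarith
    set δ := min (η/2/((m:ℝ)*C)) (η/(‖f‖+1)) with hδdef
    have hδ0 : 0 < δ := lt_min (by positivity) (by positivity)
    have hδ1 : (m:ℝ)*C*δ ≤ η/2 := by
      calc (m:ℝ)*C*δ ≤ (m:ℝ)*C*(η/2/((m:ℝ)*C)) := by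
            exact mul_le_mul_of_nonneg_left (min_le_left _ _) hmC0.le
        _ = η/2 := by field_simp
    have hδ2 : ‖f‖*δ ≤ η := by
      calc ‖f‖*δ ≤ ‖f‖*(η/(‖f‖+1)) :=
            mul_le_mul_of_nonneg_left (min_le_right _ _) (norm_nonneg f)
        _ ≤ η := by
          rw [mul_comm, div_mul_eq_mul_div, div_le_iff₀ (by positivity)]
          nlinarith [norm_nonneg f]
    clear_value δ
    obtain ⟨S₀, c₀, hS₀D, hsum₀, hrep₀⟩ :
        ∃ (S : Finset H) (c : H → ℝ), ↑S ⊆ D ∧ (∑ x ∈ S, |c x|) ≤ M ∧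
          ‖f - ∑ x ∈ S, c x • x‖ ≤ δ := by
      have hcl : f ∈ closure (repSet D 1 M) := hMA
      obtain ⟨h₀, hmem, hd⟩ := Metric.mem_closure_iff.1 hcl δ hδ0
      obtain ⟨S, c, hSD, hsum, rfl⟩ := hmem
      refine ⟨S, c, hSD, ?_, ?_⟩
      · have h2 : ∑ x ∈ S, |c x| = ∑ x ∈ S, |c x| ^ (1:ℝ) := by
          simp [Real.rpow_one]
        rw [h2]
        calc ∑ x ∈ S, |c x| ^ (1:ℝ) ≤ M ^ (1:ℝ) := hsum
          _ = M := Real.rpow_one M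
      · rw [← dist_eq_norm]; exact hd.le
    have hrep : ∀ k : ℕ, ∃ (S : Finset H) (c : H → ℝ), ↑S ⊆ D ∧
        (∑ x ∈ S, |c x|) ≤ M + (k : ℝ) * (C * δ) ∧ ‖fs k - ∑ x ∈ S, c x • x‖ ≤ δ := by
      intro k
      induction k with
      | zero =>
        refine ⟨S₀, c₀, hS₀D, by simpa using hsum₀, by rw [h0]; exact hrep₀⟩
      | succ n ih =>
        obtain ⟨S, c, hSD, hsum, hrn⟩ := ih
        obtain ⟨S', c', hS'D, hsum', heq⟩ := onestep D hDnorm μ' hμ'0 hμ'lt hμ' δ hδ0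
          (fs n) S c hSD (gs (n+1)) (hgD n) (fun g' hg' => hgreedy n g' hg') hrn
        rw [← hCdef] at hsum'
        refine ⟨S', c', hS'D, ?_, ?_⟩
        · push_cast
          push_cast at hsum
          linarith [hsum', hsum]
        · rw [hstep n, heq]
          have h3 : fs n - ⟪fs n, gs (n+1)⟫ • gs (n+1)
              - ((∑ x ∈ S, c x • x) - ⟪fs n, gs (n+1)⟫ • gs (n+1))
              = fs n - ∑ x ∈ S, c x • x := by abel
          rw [h3]; exact hrn
    set N' := M + (m:ℝ)*C*δ with hN'def
    have hN'pos : 0 < N' := by rw [hN'def]; nlinarith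
    set A := N'^2 with hAdef
    have hApos : 0 < A := by positivity
    clear_value N' A
    have hfN : ‖f‖ ≤ N' := by
      obtain ⟨S, c, hSD, hsum, hr0⟩ := hrep 0
      have h1 : ‖∑ x ∈ S, c x • x‖ ≤ ∑ x ∈ S, |c x| := by
        calc ‖∑ x ∈ S, c x • x‖ ≤ ∑ x ∈ S, ‖c x • x‖ := norm_sum_le _ _
          _ = ∑ x ∈ S, |c x| := Finset.sum_congr rfl fun x hx => by
              rw [norm_smul, hDnorm x (hSD hx), mul_one, Real.norm_eq_abs]
      rw [h0] at hr0
      have h3 := norm_sub_norm_le f (∑ x ∈ S, c x • x)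
      have h4 : (∑ x ∈ S, |c x|) ≤ M := by simpa using hsum
      have h5 : δ ≤ (m:ℝ)*C*δ := le_mul_of_one_le_left hδ0.le hmC1
      rw [hN'def]; linarith [h3.trans hr0]
    set d : ℕ → ℝ := fun k => max (‖fs k‖^2 - ‖f‖*δ) 0 with hddef
    have hd0 : ∀ k, 0 ≤ d k := fun k => le_max_right _ _
    have hdmax : ∀ k, ‖fs k‖^2 - ‖f‖*δ ≤ d k := fun k => le_max_left _ _
    have hdle : ∀ (k : ℕ) (b : ℝ), ‖fs k‖^2 - ‖f‖*δ ≤ b → 0 ≤ b → d k ≤ b :=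
      fun k b h1 h2 => max_le h1 h2
    clear_value d
    have hdb : ∀ k, d k ≤ ‖f‖^2 := fun k =>
      hdle k _ (by have h1 := mul_nonneg (norm_nonneg f) hδ0.le; linarith [hbmono k]) (by positivity)
    have hdA : ∀ k, d k ≤ A := fun k => (hdb k).trans
      (by rw [hAdef]; exact pow_le_pow_left₀ (norm_nonneg f) hfN 2)
    have hrec : ∀ k, k < m → d (k+1) ≤ d k - (d k)^2 / A := by
      intro k hkm
      obtain ⟨S, c, hSD, hsum, hrk⟩ := hrep k
      set T := ∑ x ∈ S, |c x| with hTdef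
      have hT0 : 0 ≤ T := Finset.sum_nonneg fun x _ => abs_nonneg _
      have hTN : T ≤ N' := by
        rw [hN'def]
        have hk : (k:ℝ) ≤ (m:ℝ) := by exact_mod_cast hkm.le
        have hCδ0 : 0 ≤ C*δ := by positivity
        have h6 : (k:ℝ)*(C*δ) ≤ (m:ℝ)*(C*δ) := mul_le_mul_of_nonneg_right hk hCδ0
        linarith [hsum]
      set t := ⟪fs k, gs (k+1)⟫ with htdef
      have hlb : ‖fs k‖^2 ≤ |t| * T + ‖f‖ * δ := by
        have e1 : ‖fs k‖^2 = ⟪fs k, ∑ x ∈ S, c x • x⟫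
            + ⟪fs k, fs k - ∑ x ∈ S, c x • x⟫ := by
          have h6 := inner_sub_right (𝕜 := ℝ) (fs k) (fs k) (∑ x ∈ S, c x • x)
          rw [← real_inner_self_eq_norm_sq]
          linarith
        have e2 : ⟪fs k, ∑ x ∈ S, c x • x⟫ = ∑ x ∈ S, c x * ⟪fs k, x⟫ := by
          rw [inner_sum]
          exact Finset.sum_congr rfl fun x _ => real_inner_smul_right _ _ _
        have e3 : ∑ x ∈ S, c x * ⟪fs k, x⟫ ≤ T * |t| := by
          rw [hTdef, Finset.sum_mul]
          refine Finset.sum_le_sum fun x hx => ?_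
          have h5 : |⟪fs k, x⟫| ≤ |t| := hgreedy k x (hSD hx)
          calc c x * ⟪fs k, x⟫ ≤ |c x * ⟪fs k, x⟫| := le_abs_self _
            _ = |c x| * |⟪fs k, x⟫| := abs_mul _ _
            _ ≤ |c x| * |t| := mul_le_mul_of_nonneg_left h5 (abs_nonneg _)
        have e4 : ⟪fs k, fs k - ∑ x ∈ S, c x • x⟫ ≤ ‖f‖ * δ := by
          calc ⟪fs k, fs k - ∑ x ∈ S, c x • x⟫
              ≤ ‖fs k‖ * ‖fs k - ∑ x ∈ S, c x • x‖ := real_inner_le_norm _ _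
            _ ≤ ‖f‖ * δ := mul_le_mul (hnmono k) hrk (norm_nonneg _) (norm_nonneg f)
        rw [e2] at e1
        linarith [mul_comm T (|t|) ▸ e3]
      have hdt : d k ≤ |t| * N' := by
        apply hdle
        · have h7 : |t| * T ≤ |t| * N' := mul_le_mul_of_nonneg_left hTN (abs_nonneg _)
          linarith
        · positivity
      have hq : (d k)^2 / A ≤ t^2 := by
        rw [hAdef, div_le_iff₀ (by positivity)]
        calc (d k)^2 ≤ (|t| * N')^2 := by
              have := hd0 k
              nlinarith [hdt]
          _ = t^2 * N'^2 := by rw [mul_pow, sq_abs]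
      have e5 : ‖fs (k+1)‖^2 - ‖f‖*δ ≤ d k - (d k)^2/A := by
        rw [hb k, ← htdef]
        have h7 : ‖fs k‖^2 - ‖f‖*δ ≤ d k := hdmax k
        linarith [hq]
      have e6 : 0 ≤ d k - (d k)^2/A := by
        have h8 : (d k)^2 / A ≤ d k := by
          rw [div_le_iff₀ hApos]
          nlinarith [hd0 k, hdA k]
        linarith
      exact hdle _ _ e5 e6
    have hfin := rec_bound A hApos m d hd0 (hdA 1) hrec m hm le_rfl
    have h9 : ‖fs m‖^2 - ‖f‖*δ ≤ d m := hdmax m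
    have hN'le : N' ≤ M₀ + η := by rw [hN'def]; linarith [hδ1, hMlt]
    have hA_le : A ≤ (M₀+η)^2 := by rw [hAdef]; nlinarith [hN'pos.le]
    have h11 : A/(m:ℝ) ≤ (M₀+η)^2/m := by
      gcongr
    linarith [hδ2, hfin, h9, h11]
  have hsq : ‖fs m‖^2 ≤ M₀^2 / m := by
    apply le_of_forall_pos_le_add
    intro ε hε
    set η := min 1 (ε/(2*M₀+2)) with hηdef
    have hη0 : 0 < η := lt_min one_pos (by positivity)
    have hη1 : η ≤ 1 := min_le_left _ _
    have hη2 : η ≤ ε/(2*M₀+2) := min_le_right _ _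
    have hk := key η hη0
    have hexp : (M₀+η)^2/m ≤ M₀^2/m + (2*M₀*η + η^2) := by
      have h1 : (M₀+η)^2 = M₀^2 + (2*M₀*η+η^2) := by ring
      rw [h1, add_div]
      have h2 : (2*M₀*η+η^2)/(m:ℝ) ≤ 2*M₀*η+η^2 :=
        div_le_self (by positivity) hm1
      linarith
    have h3 : η^2 ≤ η := by nlinarith
    have h4 : (2*M₀+2)*η ≤ ε := by
      calc (2*M₀+2)*η ≤ (2*M₀+2)*(ε/(2*M₀+2)) :=
            mul_le_mul_of_nonneg_left hη2 (by linarith)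
        _ = ε := by field_simp
    linarith
  have hrw : (m:ℝ) ^ (-(1/2) : ℝ) = (Real.sqrt m)⁻¹ := by
    rw [Real.rpow_neg (Nat.cast_nonneg m), Real.sqrt_eq_rpow]
  rw [hrw]
  have h2 : M₀ * (Real.sqrt m)⁻¹ = Real.sqrt (M₀^2 / m) := by
    rw [Real.sqrt_div (sq_nonneg M₀), Real.sqrt_sq hM₀0, div_eq_mul_inv]
  rw [h2]
  calc ‖fs m‖ = Real.sqrt (‖fs m‖^2) := (Real.sqrt_sq (norm_nonneg _)).symm
    _ ≤ Real.sqrt (M₀^2/m) := Real.sqrt_le_sqrt hsq
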